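/- Let p be an odd prime, q = p^m, D ⊆ F_q a set of size n, and suppose the code C_D has dimension m over F_p. Then for every 1 ≤ r ≤ m, d_r(C_D) = n − max{ |D ∩ H| : H is an F_p-subspace of F_q of dimension m − r }. -/

import Mathlib

open scoped Classical

/-- The `r`-th generalized Hamming weight of a linear code `C ⊆ F_p^ι`:
the minimum cardinality of the support of an `r`-dimensional subcode of `C`. -/
noncomputable def ghw {ι : Type*} [Fintype ι] (p : ℕ)
    (C : Submodule (ZMod p) (ι → ZMod p)) (r : ℕ) : ℕ :=
  sInf {w : ℕ | ∃ U : Submodule (ZMod p) (ι → ZMod p), U ≤ C ∧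
    Module.finrank (ZMod p) U = r ∧
    (Finset.univ.filter fun i : ι => ∃ x ∈ U, x i ≠ 0).card = w}

/-- The linear code `C_D = {(Tr_{q/p}(a d))_{d ∈ D} : a ∈ F_q}` over `F_p`
with defining set `D ⊆ F_q`, with coordinates indexed by the elements of `D`. -/
noncomputable def codeD (p : ℕ) (F : Type*) [Field F] [Fintype F] [Algebra (ZMod p) F]
    (D : Finset F) : Submodule (ZMod p) (D → ZMod p) :=
  LinearMap.range (LinearMap.pi fun x : D =>
    (Algebra.trace (ZMod p) F).comp (LinearMap.mulRight (ZMod p) (x : F)))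

open Module Finset

/-- if `q = p^m`, `|D| = n` and `dim C_D = m`, then for `1 ≤ r ≤ m`,
`d_r(C_D) = n - max{|D ∩ H| : H ≤ F_q an F_p-subspace of dimension m - r}`. -/
theorem ghw_codeD_eq_sub_max_inter
    (p m n : ℕ) (hp : p.Prime) (hodd : Odd p)
    (F : Type*) [Field F] [Fintype F] [Algebra (ZMod p) F]
    (hF : Fintype.card F = p ^ m)
    (D : Finset F) (hn : D.card = n)
    (hdim : Module.finrank (ZMod p) (codeD p F D) = m)
    (r : ℕ) (hr1 : 1 ≤ r) (hr2 : r ≤ m) :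
    ghw p (codeD p F D) r =
      n - sSup {c : ℕ | ∃ H : Submodule (ZMod p) F,
        Module.finrank (ZMod p) H = m - r ∧ (D.filter fun x => x ∈ H).card = c} := by
  set B := Algebra.traceForm (ZMod p) F with hBdef
  have hrefl : B.IsRefl := (Algebra.traceForm_isSymm (R := ZMod p) (S := F)).isRefl
  have hFm : Module.finrank (ZMod p) F = m := by
    haveI : Fact p.Prime := ⟨hp⟩
    have h := card_eq_pow_finrank (K := ZMod p) (V := F)
    rw [ZMod.card, hF] at h
    exact (Nat.pow_right_injective hp.two_le h.symm)
  set φ : F →ₗ[ZMod p] (D → ZMod p) := LinearMap.pi fun x : D =>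
    (Algebra.trace (ZMod p) F).comp (LinearMap.mulRight (ZMod p) (x : F)) with hφdef
  have hcode : codeD p F D = LinearMap.range φ := rfl
  have hinj : Function.Injective φ := by
    haveI : Fact p.Prime := ⟨hp⟩
    rw [← LinearMap.ker_eq_bot]
    have h1 := LinearMap.finrank_range_add_finrank_ker φ
    rw [← hcode, hdim, hFm] at h1
    have h0 : finrank (ZMod p) (LinearMap.ker φ) = 0 := by omega
    exact Submodule.finrank_eq_zero.mp h0
  have hφapp : ∀ (a : F) (i : D), φ a i = B a (i : F) := fun a i => by
    simp [hφdef, hBdef, Algebra.traceForm_apply, LinearMap.pi_apply]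
  have hsupp : ∀ V : Submodule (ZMod p) F,
      (Finset.univ.filter fun i : D => ∃ x ∈ Submodule.map φ V, x i ≠ 0).card
        = n - (D.filter fun x => x ∈ B.orthogonal V).card := by
    intro V
    have hiff : ∀ i : D, (∃ x ∈ Submodule.map φ V, x i ≠ 0) ↔ ¬((i : F) ∈ B.orthogonal V) := by
      intro i
      rw [LinearMap.BilinForm.mem_orthogonal_iff]
      push_neg
      constructor
      · rintro ⟨x, hx, hxi⟩
        obtain ⟨a, ha, rfl⟩ := Submodule.mem_map.mp hx
        exact ⟨a, ha, fun h => hxi ((hφapp a i).trans h)⟩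
      · rintro ⟨a, ha, hai⟩
        exact ⟨φ a, Submodule.mem_map_of_mem ha,
          fun h => hai ((hφapp a i).symm.trans h)⟩
    have h1 : (univ.filter fun i : D => ¬ (∃ x ∈ Submodule.map φ V, x i ≠ 0))
        = univ.filter (fun i : D => (i : F) ∈ B.orthogonal V) :=
      Finset.filter_congr (fun i _ => by rw [hiff i, not_not])
    have h2 : (univ.filter fun i : D => (i : F) ∈ B.orthogonal V).card
        = (D.filter fun x => x ∈ B.orthogonal V).card := by
      refine Finset.card_bij (fun i _ => (i : F)) ?_ ?_ ?_
      · intro a ha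
        simp only [Finset.mem_filter, Finset.mem_univ, true_and] at ha ⊢
        exact ⟨a.2, ha⟩
      · intro a _ b _ h
        exact Subtype.ext h
      · intro b hb
        simp only [Finset.mem_filter] at hb
        exact ⟨⟨b, hb.1⟩, Finset.mem_filter.mpr ⟨Finset.mem_univ _, hb.2⟩, rfl⟩
    have h3 : (univ.filter fun i : D => ∃ x ∈ Submodule.map φ V, x i ≠ 0).card
        + (univ.filter fun i : D => ¬ ∃ x ∈ Submodule.map φ V, x i ≠ 0).card
        = (univ : Finset D).card :=
      Finset.card_filter_add_card_filter_not _
    have h4 : (univ : Finset D).card = n := by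
      rw [Finset.card_univ, Fintype.card_coe, hn]
    rw [h1, h2, h4] at h3
    exact Nat.eq_sub_of_add_eq h3
  have horth : ∀ V : Submodule (ZMod p) F,
      finrank (ZMod p) (B.orthogonal V) = m - finrank (ZMod p) V := by
    intro V
    haveI : Fact p.Prime := ⟨hp⟩
    have hB : B.Nondegenerate := traceForm_nondegenerate (ZMod p) F
    rw [LinearMap.BilinForm.finrank_orthogonal hB, hFm]
  have horthorth : ∀ V : Submodule (ZMod p) F, B.orthogonal (B.orthogonal V) = V := by
    intro V
    haveI : Fact p.Prime := ⟨hp⟩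
    have hB : B.Nondegenerate := traceForm_nondegenerate (ZMod p) F
    exact LinearMap.BilinForm.orthogonal_orthogonal hB hrefl V
  have hrankmap : ∀ V : Submodule (ZMod p) F,
      finrank (ZMod p) (Submodule.map φ V) = finrank (ZMod p) V :=
    fun V => ((Submodule.equivMapOfInjective φ hinj V).finrank_eq).symm
  have forward : ∀ w, (∃ U : Submodule (ZMod p) (D → ZMod p), U ≤ codeD p F D ∧
        finrank (ZMod p) U = r ∧
        (univ.filter fun i : D => ∃ x ∈ U, x i ≠ 0).card = w) →
      ∃ c, (∃ H : Submodule (ZMod p) F, finrank (ZMod p) H = m - r ∧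
          (D.filter fun x => x ∈ H).card = c)
        ∧ c ≤ n ∧ w = n - c := by
    rintro w ⟨U, hUle, hUr, hUw⟩
    set V := U.comap φ with hVdef
    have hmap : Submodule.map φ V = U := by
      rw [hVdef, Submodule.map_comap_eq]
      rw [hcode] at hUle
      exact inf_eq_right.mpr hUle
    have hVr : finrank (ZMod p) V = r := by rw [← hUr, ← hmap, hrankmap]
    refine ⟨(D.filter fun x => x ∈ B.orthogonal V).card, ⟨B.orthogonal V, ?_, rfl⟩,
      le_of_le_of_eq (Finset.card_filter_le _ _) hn, ?_⟩
    · rw [horth, hVr]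
    · rw [← hUw, ← hmap, hsupp V]
  have backward : ∀ H : Submodule (ZMod p) F, finrank (ZMod p) H = m - r →
      ∃ U : Submodule (ZMod p) (D → ZMod p), U ≤ codeD p F D ∧ finrank (ZMod p) U = r ∧
        (univ.filter fun i : D => ∃ x ∈ U, x i ≠ 0).card
          = n - (D.filter fun x => x ∈ H).card := by
    intro H hH
    have hVr : finrank (ZMod p) (B.orthogonal H) = r := by
      rw [horth, hH]
      omega
    refine ⟨Submodule.map φ (B.orthogonal H), ?_, ?_, ?_⟩
    · rw [hcode]; exact LinearMap.map_le_range
    · rw [hrankmap, hVr]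
    · rw [hsupp (B.orthogonal H), horthorth]
  set T := {c : ℕ | ∃ H : Submodule (ZMod p) F,
      finrank (ZMod p) H = m - r ∧ (D.filter fun x => x ∈ H).card = c} with hTdef
  obtain ⟨s, hscard, hsind⟩ : ∃ s : Finset F, s.card = m - r ∧
      LinearIndependent (ZMod p) ((↑) : s → F) := by
    haveI : Fact p.Prime := ⟨hp⟩
    exact exists_finset_linearIndependent_of_le_finrank
      (R := ZMod p) (M := F) (by omega)
  have hH0 : finrank (ZMod p) (Submodule.span (ZMod p) (s : Set F)) = m - r := by
    haveI : Fact p.Prime := ⟨hp⟩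
    rw [finrank_span_finset_eq_card hsind, hscard]
  have hTne : T.Nonempty := ⟨_, Submodule.span (ZMod p) (s : Set F), hH0, rfl⟩
  have hTbdd : BddAbove T := by
    refine ⟨n, ?_⟩
    rintro c ⟨H, -, rfl⟩
    exact le_of_le_of_eq (Finset.card_filter_le _ _) hn
  obtain ⟨H₀, hH₀r, hH₀c⟩ := Nat.sSup_mem hTne hTbdd
  obtain ⟨U₀, hU₀le, hU₀r, hU₀c⟩ := backward H₀ hH₀r
  unfold ghw
  apply le_antisymm
  · exact Nat.sInf_le ⟨U₀, hU₀le, hU₀r, by rw [hU₀c, hH₀c]⟩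
  · refine le_csInf ⟨_, U₀, hU₀le, hU₀r, rfl⟩ ?_
    rintro w ⟨U, hUle, hUr, hUw⟩
    obtain ⟨c, hcT, hcn, rfl⟩ := forward _ ⟨U, hUle, hUr, hUw⟩
    have hcs : c ≤ sSup T := le_csSup hTbdd hcT
    have : n - sSup T ≤ n - c := Nat.sub_le_sub_left hcs n
    exact this
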